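/- arXiv:2506.10894 — 2 statements merged into one kernel-verified Lean document; each statement's English description precedes it below -/
import Mathlib

section
/- Let H₁, H₂ be real Hilbert spaces, κ > 0, and define for (u, e, s) ∈ H₁ × H₂ × H₂ the norm ‖(u,e,s)‖²_X = ‖u‖₁² + ‖e‖₂² + κ‖s‖₂² (where ‖u‖₁ denotes a given Hilbert norm). For (λ, μ) with λ in a space whose gradient lands in H₂ and μ ∈ H₂, define b((u,e,s),(λ,μ)) = ⟨μ, e⟩ - ⟨μ, Gu⟩ - ⟨Gλ, s⟩ + ⟨λ, ζu⟩ for a bounded linear map G. Then choosing u = 0, e = μ, s = -(1/κ)Gλ gives b((0, μ, -(1/κ)Gλ),(λ,μ)) = ‖μ‖² + (1/κ)‖Gλ‖² and ‖(0, μ, -(1/κ)Gλ)‖_X = √(‖μ‖² + (1/κ)‖Gλ‖²), so that sup over x of b(x,y)/‖x‖_X ≥ √((1/κ)‖Gλ‖² + ‖μ‖²) for every (λ, μ). -/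
open scoped RealInnerProductSpace

/-- Abstract inf-sup condition with constant 1 for the constraint form `b`. -/
theorem infsup_constant_one
    {H₀ H₂ : Type*} [NormedAddCommGroup H₀] [InnerProductSpace ℝ H₀] [CompleteSpace H₀]
    [NormedAddCommGroup H₂] [InnerProductSpace ℝ H₂] [CompleteSpace H₂]
    (G : H₀ →L[ℝ] H₂) (ζ : H₀ →L[ℝ] H₀) (κ : ℝ) (hκ : 0 < κ)
    (b : H₀ → H₂ → H₂ → H₀ → H₂ → ℝ)
    (hb : ∀ u e s l m, b u e s l m = ⟪m, e⟫ - ⟪m, G u⟫ - ⟪G l, s⟫ + ⟪l, ζ u⟫)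
    (l : H₀) (m : H₂) :
    b 0 m (-(1/κ) • G l) l m = ‖m‖ ^ 2 + (1/κ) * ‖G l‖ ^ 2 ∧
    Real.sqrt (‖(0 : H₀)‖ ^ 2 + ‖m‖ ^ 2 + κ * ‖-(1/κ) • G l‖ ^ 2)
      = Real.sqrt (‖m‖ ^ 2 + (1/κ) * ‖G l‖ ^ 2) ∧
    (∃ u : H₀, ∃ e s : H₂,
      b u e s l m / Real.sqrt (‖u‖ ^ 2 + ‖e‖ ^ 2 + κ * ‖s‖ ^ 2)
        ≥ Real.sqrt ((1/κ) * ‖G l‖ ^ 2 + ‖m‖ ^ 2)) := by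
  have hκ0 : κ ≠ 0 := ne_of_gt hκ
  have hb0 : b 0 m (-(1/κ) • G l) l m = ‖m‖ ^ 2 + (1/κ) * ‖G l‖ ^ 2 := by
    rw [hb]
    simp [real_inner_smul_right, real_inner_self_eq_norm_sq]
  have hnorm : κ * ‖-(1/κ) • G l‖ ^ 2 = (1/κ) * ‖G l‖ ^ 2 := by
    rw [norm_smul]
    simp [abs_of_pos hκ, mul_pow]
    field_simp
  refine ⟨hb0, by rw [hnorm]; simp, ?_⟩
  refine ⟨0, m, -(1/κ) • G l, ?_⟩
  rw [hb0]
  simp only [norm_zero, ne_eq]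
  rw [hnorm]
  have h0 : (0:ℝ) ≤ (1/κ) * ‖G l‖ ^ 2 := by positivity
  have h1 : (0:ℝ) ≤ ‖m‖ ^ 2 := by positivity
  have key : (0:ℝ)^2 + ‖m‖ ^ 2 + (1/κ) * ‖G l‖ ^ 2 = (1/κ) * ‖G l‖ ^ 2 + ‖m‖ ^ 2 := by ring
  rw [key]
  set S := (1/κ) * ‖G l‖ ^ 2 + ‖m‖ ^ 2 with hS
  have hS0 : 0 ≤ S := by positivity
  rcases eq_or_lt_of_le hS0 with h | h
  · rw [← h]; simp
  · have hsq : Real.sqrt S * Real.sqrt S = S := Real.mul_self_sqrt hS0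
    have : (‖m‖ ^ 2 + (1/κ) * ‖G l‖ ^ 2) / Real.sqrt S = Real.sqrt S := by
      rw [show ‖m‖ ^ 2 + (1/κ) * ‖G l‖ ^ 2 = S by rw [hS]; ring, ← hsq]
      field_simp
      rw [Real.sqrt_sq (Real.sqrt_nonneg S)]
    rw [this]
end

section
/- Let V, Q be real Hilbert spaces, a: V×V → ℝ a continuous bilinear form on X = V, b a continuous bilinear form on V×Q, and B((x,y),(x',y')) = a(x,x') + b(x',y) - b(x,y'). If a is coercive on the kernel Z = {x : b(x,q) = 0 ∀q} with constant 1/2 and b satisfies the inf-sup condition with constant 1, then for every continuous linear functional F on V×Q the problem B((x,y),(δx,δy)) = F(δx,δy) for all (δx,δy) has a unique solution. -/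
set_option maxHeartbeats 1000000
open InnerProductSpace ContinuousLinearMap RealInnerProductSpace

section Helpers

variable {V Q : Type*} [NormedAddCommGroup V] [InnerProductSpace ℝ V]
    [NormedAddCommGroup Q] [InnerProductSpace ℝ Q] [CompleteSpace Q]

/-- The operator associated to a continuous bilinear form via Riesz representation. -/
noncomputable def opOfBilin (b : V →L[ℝ] Q →L[ℝ] ℝ) : V →L[ℝ] Q :=
  ((InnerProductSpace.toDual ℝ Q).symm.toContinuousLinearEquiv.toContinuousLinearMap).comp b

@[simp] lemma opOfBilin_apply (b : V →L[ℝ] Q →L[ℝ] ℝ) (x : V) (q : Q) :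
    ⟪opOfBilin b x, q⟫_ℝ = b x q := by
  simp [opOfBilin]

end Helpers

/-- Abstract Brezzi-type well-posedness for the skew-symmetrized saddle-point form. -/
theorem brezzi_wellposedness
    {V Q : Type*} [NormedAddCommGroup V] [InnerProductSpace ℝ V] [CompleteSpace V]
    [NormedAddCommGroup Q] [InnerProductSpace ℝ Q] [CompleteSpace Q]
    (a : V →L[ℝ] V →L[ℝ] ℝ) (b : V →L[ℝ] Q →L[ℝ] ℝ)
    (hcoer : ∀ x : V, (∀ q : Q, b x q = 0) → a x x ≥ (1/2) * ‖x‖ ^ 2)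
    (hinfsup : ∀ y : Q, (⨆ x : {x : V // x ≠ 0}, b x.1 y / ‖x.1‖) ≥ ‖y‖) :
    ∀ F : (V × Q) →L[ℝ] ℝ,
      ∃! z : V × Q, ∀ w : V × Q,
        a z.1 w.1 + b w.1 z.2 - b z.1 w.2 = F w := by
  -- Operators associated to the bilinear forms
  set Bop : V →L[ℝ] Q := opOfBilin b with hBop
  set Bst : Q →L[ℝ] V := ContinuousLinearMap.adjoint Bop with hBst
  have hb : ∀ (x : V) (q : Q), b x q = ⟪x, Bst q⟫_ℝ := by
    intro x q
    rw [hBst, ContinuousLinearMap.adjoint_inner_right, opOfBilin_apply]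
  -- B* is bounded below
  have hlow : ∀ y : Q, ‖y‖ ≤ ‖Bst y‖ := by
    intro y
    have h1 : (⨆ x : {x : V // x ≠ 0}, b x.1 y / ‖x.1‖) ≤ ‖Bst y‖ := by
      apply Real.iSup_le
      · rintro ⟨x, hx⟩
        rw [div_le_iff₀ (norm_pos_iff.mpr hx), hb]
        calc ⟪x, Bst y⟫_ℝ ≤ ‖x‖ * ‖Bst y‖ := real_inner_le_norm x (Bst y)
          _ = ‖Bst y‖ * ‖x‖ := mul_comm _ _
      · exact norm_nonneg _
    exact le_trans (hinfsup y) h1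
  -- S = B B* is coercive, hence invertible by Lax–Milgram
  set S : Q →L[ℝ] Q := Bop.comp Bst with hS
  set β : Q →L[ℝ] Q →L[ℝ] ℝ := (innerSL ℝ).comp S with hβ
  have hβapp : ∀ y y' : Q, β y y' = ⟪S y, y'⟫_ℝ := fun y y' => rfl
  have coerS : IsCoercive β := by
    refine ⟨1, one_pos, fun y => ?_⟩
    have h1 : β y y = ⟪Bst y, Bst y⟫_ℝ := by
      rw [hβapp]
      show ⟪Bop (Bst y), y⟫_ℝ = _
      rw [← ContinuousLinearMap.adjoint_inner_right, ← hBst]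
    have h2 : ‖y‖ * ‖y‖ ≤ ‖Bst y‖ * ‖Bst y‖ :=
      mul_le_mul (hlow y) (hlow y) (norm_nonneg _) (norm_nonneg _)
    rw [h1, real_inner_self_eq_norm_mul_norm]
    linarith
  set eS := coerS.continuousLinearEquivOfBilin with heSdef
  have heS : ∀ y : Q, eS y = S y := by
    intro y
    refine ext_inner_right ℝ (fun w => ?_)
    rw [coerS.continuousLinearEquivOfBilin_apply, hβapp]
  have hSinv : ∀ q : Q, S (eS.symm q) = q := by
    intro q; rw [← heS, ContinuousLinearEquiv.apply_symm_apply]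
  -- the kernel of B
  set K : Submodule ℝ V := LinearMap.ker (Bop : V →ₗ[ℝ] Q) with hK
  haveI : CompleteSpace ↥K := Bop.isClosed_ker.completeSpace_coe
  have hmemK : ∀ x : V, x ∈ K ↔ ∀ q : Q, b x q = 0 := by
    intro x
    constructor
    · intro hx q
      rw [← opOfBilin_apply, ← hBop, (show Bop x = 0 from LinearMap.mem_ker.mp hx), inner_zero_left]
    · intro hx
      rw [hK, LinearMap.mem_ker, ContinuousLinearMap.coe_coe]
      refine ext_inner_right ℝ (fun q => ?_)
      rw [opOfBilin_apply, hx q, inner_zero_left]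
  -- a restricted to K is coercive, Lax–Milgram on K
  set α : ↥K →L[ℝ] ↥K →L[ℝ] ℝ := a.bilinearComp K.subtypeL K.subtypeL with hα
  have hαapp : ∀ z z' : ↥K, α z z' = a z.1 z'.1 := fun z z' => rfl
  have coerα : IsCoercive α := by
    refine ⟨1/2, by norm_num, fun z => ?_⟩
    have h1 := hcoer z.1 ((hmemK z.1).mp z.2)
    have h2 : ‖z‖ = ‖z.1‖ := rfl
    rw [hαapp, h2]
    rw [pow_two] at h1
    linarith
  set eK := coerα.continuousLinearEquivOfBilin with heKdef
  intro F
  -- Riesz representatives of the two components of F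
  set f : V := (InnerProductSpace.toDual ℝ V).symm (F.comp (ContinuousLinearMap.inl ℝ V Q)) with hfdef
  set g : Q := (InnerProductSpace.toDual ℝ Q).symm (F.comp (ContinuousLinearMap.inr ℝ V Q)) with hgdef
  have hf : ∀ x' : V, ⟪f, x'⟫_ℝ = F (x', 0) := by
    intro x'; rw [hfdef, InnerProductSpace.toDual_symm_apply]; rfl
  have hg : ∀ y' : Q, ⟪g, y'⟫_ℝ = F (0, y') := by
    intro y'; rw [hgdef, InnerProductSpace.toDual_symm_apply]; rfl
  -- particular solution of the constraint
  set x₀ : V := Bst (eS.symm (-g)) with hx0def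
  have hx0 : Bop x₀ = -g := hSinv (-g)
  -- solve the reduced problem on K
  set ℓ : ↥K →L[ℝ] ℝ := (innerSL ℝ f - a x₀).comp K.subtypeL with hℓ
  set z₀ : ↥K := eK.symm ((InnerProductSpace.toDual ℝ ↥K).symm ℓ) with hz0def
  have hz0 : ∀ z' : ↥K, a z₀.1 z'.1 = ⟪f, z'.1⟫_ℝ - a x₀ z'.1 := by
    intro z'
    have h1 : ⟪eK z₀, z'⟫_ℝ = α z₀ z' := coerα.continuousLinearEquivOfBilin_apply z₀ z'
    rw [hz0def, ContinuousLinearEquiv.apply_symm_apply, InnerProductSpace.toDual_symm_apply] at h1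
    have h2 : ℓ z' = ⟪f, z'.1⟫_ℝ - a x₀ z'.1 := by
      simp [hℓ, ContinuousLinearMap.sub_apply]
    rw [← hαapp, ← h1, h2]
  set x : V := (z₀ : V) + x₀ with hxdef
  have hxK : ∀ z' : ↥K, a x z'.1 = ⟪f, z'.1⟫_ℝ := by
    intro z'
    rw [hxdef, map_add, ContinuousLinearMap.add_apply, hz0 z']
    ring
  have hBx : Bop x = -g := by
    rw [hxdef, map_add, (show Bop (z₀ : V) = 0 from LinearMap.mem_ker.mp z₀.2), zero_add, hx0]
  -- construct the multiplier y
  set f' : V := (InnerProductSpace.toDual ℝ V).symm (innerSL ℝ f - a x) with hf'def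
  have hf' : ∀ x' : V, ⟪f', x'⟫_ℝ = ⟪f, x'⟫_ℝ - a x x' := by
    intro x'
    rw [hf'def, InnerProductSpace.toDual_symm_apply, ContinuousLinearMap.sub_apply]
    rfl
  have hf'K : ∀ z' : ↥K, ⟪f', (z' : V)⟫_ℝ = 0 := by
    intro z'; rw [hf' z', hxK z']; ring
  set y : Q := eS.symm (Bop f') with hydef
  have hBsty : Bst y = f' := by
    have h1 : Bop (f' - Bst y) = 0 := by
      rw [map_sub, hydef]
      have : Bop (Bst (eS.symm (Bop f'))) = S (eS.symm (Bop f')) := rfl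
      rw [this, hSinv, sub_self]
    have hmem : f' - Bst y ∈ K := LinearMap.mem_ker.mpr h1
    have h2 : ⟪f', f' - Bst y⟫_ℝ = 0 := hf'K ⟨f' - Bst y, hmem⟩
    have h3 : ⟪Bst y, f' - Bst y⟫_ℝ = 0 := by
      rw [hBst, ContinuousLinearMap.adjoint_inner_left, ← hBst, h1, inner_zero_right]
    have h4 : ⟪f' - Bst y, f' - Bst y⟫_ℝ = 0 := by
      rw [inner_sub_left, h2, h3, sub_zero]
    have h5 : f' - Bst y = 0 := inner_self_eq_zero.mp h4
    exact (sub_eq_zero.mp h5).symm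
  have hsol : ∀ w : V × Q, a x w.1 + b w.1 y - b x w.2 = F w := by
    intro w
    have h1 : b w.1 y = ⟪f, w.1⟫_ℝ - a x w.1 := by
      rw [hb, hBsty, real_inner_comm, hf' w.1]
    have h2 : b x w.2 = -⟪g, w.2⟫_ℝ := by
      rw [← opOfBilin_apply, ← hBop, hBx, inner_neg_left]
    have h3 : ((w.1, (0 : Q)) : V × Q) + ((0 : V), w.2) = w := by
      ext <;> simp
    have h4 : F w = F (w.1, 0) + F (0, w.2) := by
      conv_lhs => rw [← h3]
      rw [map_add]
    rw [h1, h2, hf w.1, hg w.2, h4]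
    ring
  refine ⟨(x, y), hsol, ?_⟩
  rintro ⟨x', y'⟩ hz'
  have hd : ∀ w : V × Q,
      a (x' - x) w.1 + b w.1 (y' - y) - b (x' - x) w.2 = 0 := by
    intro w
    have e1 := hz' w
    have e2 := hsol w
    simp only [map_sub, ContinuousLinearMap.sub_apply] at e1 e2 ⊢
    linarith
  have hdx : ∀ q : Q, b (x' - x) q = 0 := by
    intro q
    have h := hd (0, q)
    simp only [map_sub, map_zero, ContinuousLinearMap.sub_apply,
      ContinuousLinearMap.zero_apply] at h ⊢
    linarith
  have hx'x : x' - x = 0 := by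
    have h1 := hd (x' - x, 0)
    simp only [map_zero] at h1
    have h2 : a (x' - x) (x' - x) = 0 := by
      have := hdx (y' - y)
      rw [this] at h1
      simpa using h1
    have h3 := hcoer (x' - x) hdx
    rw [h2] at h3
    have h4 : ‖x' - x‖ ^ 2 ≤ 0 := by linarith
    have h5 : ‖x' - x‖ ^ 2 = 0 := le_antisymm h4 (sq_nonneg _)
    have h6 : ‖x' - x‖ = 0 := by
      have := pow_eq_zero_iff (n := 2) (by norm_num) |>.mp h5
      exact this
    exact norm_eq_zero.mp h6
  have hdy : ∀ v : V, b v (y' - y) = 0 := by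
    intro v
    have h := hd (v, 0)
    rw [hx'x] at h
    simp only [map_zero, ContinuousLinearMap.zero_apply, map_sub,
      ContinuousLinearMap.sub_apply, zero_add, zero_sub, sub_zero, neg_eq_zero] at h ⊢
    linarith
  have hy'y : y' - y = 0 := by
    have h1 : Bst (y' - y) = 0 := by
      refine ext_inner_right ℝ (fun v => ?_)
      rw [real_inner_comm, ← hb, hdy v, inner_zero_left]
    have := hlow (y' - y)
    rw [h1, norm_zero] at this
    exact norm_eq_zero.mp (le_antisymm this (norm_nonneg _))
  have : x' = x := sub_eq_zero.mp hx'x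
  have : y' = y := sub_eq_zero.mp hy'y
  exact Prod.ext (sub_eq_zero.mp hx'x) (sub_eq_zero.mp hy'y)
end
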